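/- arXiv:2110.00611 — 2 statements merged into one kernel-verified Lean document; each statement's English description precedes it below -/
import Mathlib

section
/- Minimax theorem via intersection property: Let Φ be a convex set of real-valued functions on X and L(x,φ) := f(x) + φ(x) − g*_Φ(φ). Suppose for every α < inf_x sup_{φ∈Φ} L(x,φ) there exist φ₁, φ₂ ∈ Φ and φ̄₁ ∈ supp L(·,φ₁), φ̄₂ ∈ supp L(·,φ₂) having the intersection property on X at level α. Then inf_{x∈X} sup_{φ∈Φ} L(x,φ) = sup_{φ∈Φ} inf_{x∈X} L(x,φ). -/
/-- Φ-conjugate. -/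
noncomputable def phiConj {X : Type*} (g : X → EReal) (φ : X → ℝ) : EReal :=
  ⨆ y : X, ((φ y : EReal) - g y)

/-- The Φ-Lagrangian `L(x,φ) := f(x) + φ(x) − g*_Φ(φ)`. -/
noncomputable def phiLagrangian {X : Type*} (f g : X → EReal) (x : X) (φ : X → ℝ) : EReal :=
  f x + (φ x : EReal) - phiConj g φ

/-- Intersection property at level `α`. -/
def IntersectionProperty {X : Type*} (φ₁ φ₂ : X → ℝ) (α : ℝ) : Prop :=
  ∀ t : ℝ, t ∈ Set.Icc (0 : ℝ) 1 →
    ({x : X | t * φ₁ x + (1 - t) * φ₂ x < α} ∩ {x : X | φ₁ x < α} = ∅ ∨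
     {x : X | t * φ₁ x + (1 - t) * φ₂ x < α} ∩ {x : X | φ₂ x < α} = ∅)

/-- Minimax theorem via the intersection property: if `Φ` is a convex class
and for every `α` below the primal value there exist `φ₁, φ₂ ∈ Φ` and
minorants `φ̄₁ ≤ L(·,φ₁)`, `φ̄₂ ≤ L(·,φ₂)` with the intersection property at
level `α`, then the minimax equality holds. -/
theorem minimax_of_intersection_property {X : Type*} [AddCommGroup X] [Module ℝ X]
    (Φ : Set (X → ℝ))
    (hconv : ∀ φ₁ ∈ Φ, ∀ φ₂ ∈ Φ, ∀ t : ℝ, t ∈ Set.Icc (0 : ℝ) 1 →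
      (fun x => t * φ₁ x + (1 - t) * φ₂ x) ∈ Φ)
    (f g : X → EReal) (hf : ∀ y, f y ≠ ⊥) (hg : ∀ y, g y ≠ ⊥)
    (hfproper : ∃ y, f y ≠ ⊤) (hgproper : ∃ y, g y ≠ ⊤)
    (hip : ∀ α : ℝ, (α : EReal) < (⨅ x : X, ⨆ φ ∈ Φ, phiLagrangian f g x φ) →
      ∃ φ₁ ∈ Φ, ∃ φ₂ ∈ Φ, ∃ φb₁ φb₂ : X → ℝ,
        (∀ x : X, (φb₁ x : EReal) ≤ phiLagrangian f g x φ₁) ∧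
        (∀ x : X, (φb₂ x : EReal) ≤ phiLagrangian f g x φ₂) ∧
        IntersectionProperty φb₁ φb₂ α) :
    (⨅ x : X, ⨆ φ ∈ Φ, phiLagrangian f g x φ) =
      ⨆ φ ∈ Φ, ⨅ x : X, phiLagrangian f g x φ := by
  refine le_antisymm ?_ ?_; swap
  · refine iSup₂_le fun φ hφ => le_iInf fun x => ?_
    exact (iInf_le _ x).trans (le_iSup₂ (f := fun φ _ => phiLagrangian f g x φ) φ hφ)
  by_contra hcon
  rw [not_le] at hcon
  obtain ⟨α, hBα, hαA⟩ := EReal.exists_between_coe_real hcon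
  obtain ⟨φ₁, hφ₁, φ₂, hφ₂, φb₁, φb₂, h1, h2, hIP⟩ := hip α hαA
  obtain ⟨x₀, hx₀⟩ := hfproper
  obtain ⟨y₀, hy₀⟩ := hgproper
  obtain ⟨s₀, hs₀⟩ : ∃ s : ℝ, g y₀ = s := by
    lift g y₀ to ℝ using ⟨hy₀, hg y₀⟩ with a; exact ⟨a, rfl⟩
  -- the conjugates of φ₁ and φ₂ are finite
  have hconjreal : ∀ φ φb : X → ℝ, (∀ x : X, (φb x : EReal) ≤ phiLagrangian f g x φ) →
      ∃ r : ℝ, phiConj g φ = r := by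
    intro φ φb hφb
    have hne_top : phiConj g φ ≠ ⊤ := by
      intro htop
      have := hφb x₀
      rw [phiLagrangian, htop, EReal.sub_top] at this
      exact absurd this (by simp)
    have hne_bot : phiConj g φ ≠ ⊥ := by
      intro hbot
      have : ((φ y₀ : EReal) - g y₀) ≤ phiConj g φ := by rw [phiConj]; exact le_iSup (fun y : X => ((φ y : EReal) - g y)) y₀
      rw [hbot, hs₀, ← EReal.coe_sub, le_bot_iff] at this
      exact EReal.coe_ne_bot _ this
    lift phiConj g φ to ℝ using ⟨hne_top, hne_bot⟩ with r; exact ⟨r, rfl⟩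
  obtain ⟨r₁, hr₁⟩ := hconjreal φ₁ φb₁ h1
  obtain ⟨r₂, hr₂⟩ := hconjreal φ₂ φb₂ h2
  -- key pointwise inequality
  have key : ∀ t ∈ Set.Icc (0 : ℝ) 1, ∀ x : X,
      ((t * φb₁ x + (1 - t) * φb₂ x : ℝ) : EReal) ≤
        phiLagrangian f g x (fun x => t * φ₁ x + (1 - t) * φ₂ x) := by
    intro t ht x
    obtain ⟨ht0, ht1⟩ := ht
    have hconj : phiConj g (fun x => t * φ₁ x + (1 - t) * φ₂ x) ≤
        ((t * r₁ + (1 - t) * r₂ : ℝ) : EReal) := by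
      refine iSup_le fun y => ?_
      by_cases hgy : g y = ⊤
      · rw [hgy, EReal.sub_top]; exact bot_le
      · obtain ⟨s, hs⟩ : ∃ s : ℝ, g y = s := by
          lift g y to ℝ using ⟨hgy, hg y⟩ with a; exact ⟨a, rfl⟩
        have e1 : (φ₁ y : EReal) - g y ≤ phiConj g φ₁ := by
          rw [phiConj]; exact le_iSup (fun z : X => ((φ₁ z : EReal) - g z)) y
        have e2 : (φ₂ y : EReal) - g y ≤ phiConj g φ₂ := by
          rw [phiConj]; exact le_iSup (fun z : X => ((φ₂ z : EReal) - g z)) y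
        rw [hr₁, hs, ← EReal.coe_sub, EReal.coe_le_coe_iff] at e1
        rw [hr₂, hs, ← EReal.coe_sub, EReal.coe_le_coe_iff] at e2
        rw [hs, ← EReal.coe_sub, EReal.coe_le_coe_iff]
        show (t * φ₁ y + (1 - t) * φ₂ y) - s ≤ t * r₁ + (1 - t) * r₂
        nlinarith
    have step1 : f x + ((t * φ₁ x + (1 - t) * φ₂ x : ℝ) : EReal) -
          ((t * r₁ + (1 - t) * r₂ : ℝ) : EReal) ≤
        phiLagrangian f g x (fun x => t * φ₁ x + (1 - t) * φ₂ x) :=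
      EReal.sub_le_sub le_rfl hconj
    refine le_trans ?_ step1
    by_cases hfx : f x = ⊤
    · rw [hfx, EReal.top_add_coe, EReal.top_sub_coe]; exact le_top
    · obtain ⟨a, ha⟩ : ∃ a : ℝ, f x = a := by
        lift f x to ℝ using ⟨hfx, hf x⟩ with a; exact ⟨a, rfl⟩
      have e1 := h1 x
      have e2 := h2 x
      rw [phiLagrangian, hr₁, ha, ← EReal.coe_add, ← EReal.coe_sub,
        EReal.coe_le_coe_iff] at e1
      rw [phiLagrangian, hr₂, ha, ← EReal.coe_add, ← EReal.coe_sub,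
        EReal.coe_le_coe_iff] at e2
      rw [ha, ← EReal.coe_add, ← EReal.coe_sub, EReal.coe_le_coe_iff]
      nlinarith
  -- for each t there is a point where the convex combination is < α
  have key2 : ∀ t ∈ Set.Icc (0 : ℝ) 1, ∃ x : X, t * φb₁ x + (1 - t) * φb₂ x < α := by
    intro t ht
    have hmem := hconv φ₁ hφ₁ φ₂ hφ₂ t ht
    have hlt : (⨅ x : X, phiLagrangian f g x (fun x => t * φ₁ x + (1 - t) * φ₂ x))
        < (α : EReal) :=
      lt_of_le_of_lt
        (le_iSup₂ (f := fun φ _ => ⨅ x : X, phiLagrangian f g x φ) _ hmem) hBα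
    obtain ⟨x, hx⟩ := iInf_lt_iff.mp hlt
    refine ⟨x, ?_⟩
    have := lt_of_le_of_lt (key t ht x) hx
    exact EReal.coe_lt_coe_iff.mp this
  -- topological argument on [0,1]
  set S₁ : Set ℝ := {t | ∀ x : X, φb₁ x < α → α ≤ t * φb₁ x + (1 - t) * φb₂ x} with hS₁def
  set S₂ : Set ℝ := {t | ∀ x : X, φb₂ x < α → α ≤ t * φb₁ x + (1 - t) * φb₂ x} with hS₂def
  have hS₁c : IsClosed S₁ := by
    have : S₁ = ⋂ x ∈ {x : X | φb₁ x < α}, {t : ℝ | α ≤ t * φb₁ x + (1 - t) * φb₂ x} := by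
      ext t; simp [hS₁def, Set.mem_iInter]
    rw [this]
    exact isClosed_biInter fun x _ => isClosed_le continuous_const (by fun_prop)
  have hS₂c : IsClosed S₂ := by
    have : S₂ = ⋂ x ∈ {x : X | φb₂ x < α}, {t : ℝ | α ≤ t * φb₁ x + (1 - t) * φb₂ x} := by
      ext t; simp [hS₂def, Set.mem_iInter]
    rw [this]
    exact isClosed_biInter fun x _ => isClosed_le continuous_const (by fun_prop)
  have hcover : Set.Icc (0 : ℝ) 1 ⊆ S₁ ∪ S₂ := by
    intro t ht
    rcases hIP t ht with h | h
    · left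
      intro x hx
      by_contra hlt
      rw [not_le] at hlt
      have hx' : x ∈ ({x : X | t * φb₁ x + (1 - t) * φb₂ x < α} ∩ {x : X | φb₁ x < α}) :=
        ⟨hlt, hx⟩
      rw [h] at hx'
      exact hx'
    · right
      intro x hx
      by_contra hlt
      rw [not_le] at hlt
      have hx' : x ∈ ({x : X | t * φb₁ x + (1 - t) * φb₂ x < α} ∩ {x : X | φb₂ x < α}) :=
        ⟨hlt, hx⟩
      rw [h] at hx'
      exact hx'
  have h0mem : (0 : ℝ) ∈ Set.Icc (0 : ℝ) 1 := by constructor <;> norm_num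
  have h1mem : (1 : ℝ) ∈ Set.Icc (0 : ℝ) 1 := by constructor <;> norm_num
  have h0 : (0 : ℝ) ∈ S₁ := by
    rcases hcover h0mem with h | h
    · exact h
    · obtain ⟨x, hx⟩ := key2 0 h0mem
      have hx2 : φb₂ x < α := by linarith
      have := h x hx2
      linarith
  have h1 : (1 : ℝ) ∈ S₂ := by
    rcases hcover h1mem with h | h
    · obtain ⟨x, hx⟩ := key2 1 h1mem
      have hx1 : φb₁ x < α := by linarith
      have := h x hx1
      linarith
    · exact h
  obtain ⟨t₀, ht₀Icc, ht₀1, ht₀2⟩ :=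
    isPreconnected_closed_iff.mp isPreconnected_Icc S₁ S₂ hS₁c hS₂c hcover
      ⟨0, h0mem, h0⟩ ⟨1, h1mem, h1⟩
  obtain ⟨x, hx⟩ := key2 t₀ ht₀Icc
  obtain ⟨ht₀0, ht₀1'⟩ := ht₀Icc
  have : φb₁ x < α ∨ φb₂ x < α := by
    by_contra h
    push_neg at h
    nlinarith [h.1, h.2]
  rcases this with h | h
  · exact absurd (ht₀1 x h) (by linarith)
  · exact absurd (ht₀2 x h) (by linarith)
end

section
/- Let X be a Hilbert space and f, g: X → (-∞,+∞] be Φ_lsc-convex. Suppose x* ∈ X and φ* = (a*, w*) ∈ Φ_lsc satisfy (0,−w*) ∈ ∂_lsc f̃(x*) where f̃(x) := f(x) − a*‖x‖², and x* ∈ ∂_X g*_lsc(φ*). Then f(x*) + g(x*) = −f̃*_lsc(0,−w*) − g*_lsc(a*,w*) and this value equals inf_{x∈X}(f(x)+g(x)). -/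
open scoped RealInnerProductSpace

/-- The class `Φ_lsc` on a Hilbert space. -/
def PhiLsc (X : Type*) [NormedAddCommGroup X] [InnerProductSpace ℝ X] :
    Set (X → ℝ) :=
  {φ | ∃ a : ℝ, 0 ≤ a ∧ ∃ v : X, ∃ c : ℝ,
    ∀ x : X, φ x = -a * ‖x‖ ^ 2 + ⟪v, x⟫ + c}

/-- `h` is Φ_lsc-convex. -/
def PhiLscConvex {X : Type*} [NormedAddCommGroup X] [InnerProductSpace ℝ X]
    (h : X → EReal) : Prop :=
  ∀ x : X, h x = ⨆ φ ∈ {φ ∈ PhiLsc X | ∀ y : X, (φ y : EReal) ≤ h y}, (φ x : EReal)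

/-- `Φ_lsc`-conjugate of `h` at the elementary function `x ↦ −a‖x‖² + ⟨w,x⟩ + c`. -/
noncomputable def lscConj {X : Type*} [NormedAddCommGroup X]
    [InnerProductSpace ℝ X] (h : X → EReal) (a : ℝ) (w : X) (c : ℝ) : EReal :=
  ⨆ x : X, (((-a * ‖x‖ ^ 2 + ⟪w, x⟫ + c : ℝ) : EReal) - h x)

lemma ereal_neg_sub (r : ℝ) (u : EReal) : -((r:EReal) - u) = u - r := by
  induction u using EReal.rec with
  | bot => simp
  | coe x => rw [← EReal.coe_sub, ← EReal.coe_sub, ← EReal.coe_neg]; norm_num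
  | top => simp

lemma ereal_addadd (p q : EReal) (r₁ r₂ : ℝ) (h : r₁ + r₂ = 0) :
    ((r₁:EReal) + p) + ((r₂:EReal) + q) = p + q := by
  induction p using EReal.rec with
  | bot => simp
  | coe x =>
    induction q using EReal.rec with
    | bot => simp
    | coe y =>
      norm_cast; ring_nf; linarith [h]
    | top =>
      rw [← EReal.coe_add, EReal.add_top_of_ne_bot (EReal.coe_ne_bot _),
        EReal.add_top_of_ne_bot (EReal.coe_ne_bot _),
        EReal.add_top_of_ne_bot (EReal.coe_ne_bot _)]
  | top =>
    induction q using EReal.rec with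
    | bot => simp [EReal.add_top_of_ne_bot]
    | coe y =>
      rw [EReal.add_top_of_ne_bot (EReal.coe_ne_bot _), ← EReal.coe_add,
        EReal.top_add_of_ne_bot (EReal.coe_ne_bot _), EReal.top_add_of_ne_bot (EReal.coe_ne_bot _)]
    | top => simp [EReal.top_add_of_ne_bot]

lemma ereal_sub_swap (r : ℝ) (u b : EReal) (h : (r:EReal) - u ≤ b) : (r:EReal) - b ≤ u := by
  induction u using EReal.rec with
  | bot => rw [EReal.coe_sub_bot] at h; rw [top_le_iff] at h; simp [h]
  | coe x =>
    induction b using EReal.rec with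
    | bot => rw [← EReal.coe_sub, le_bot_iff] at h; exact absurd h (EReal.coe_ne_bot _)
    | coe y => rw [← EReal.coe_sub] at h ⊢; norm_cast at h ⊢; linarith
    | top => simp
  | top => exact le_top

lemma ereal_sub_nonpos (r : ℝ) (u : EReal) (h : (r:EReal) ≤ u) : (r:EReal) - u ≤ 0 := by
  induction u using EReal.rec with
  | bot => exact absurd h (by simp)
  | coe x => rw [← EReal.coe_sub]; norm_cast at h ⊢; linarith
  | top => simp

lemma ereal_shift (t r s : ℝ) (u v : EReal) (hts : r - s = t) (hv : v ≠ ⊤)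
    (h : (t:EReal) ≤ u - v) : (r:EReal) - u ≤ (s:EReal) - v := by
  induction v using EReal.rec with
  | bot => simp [EReal.coe_sub_bot]
  | coe y =>
    induction u using EReal.rec with
    | bot => rw [EReal.bot_sub] at h; exact absurd h (by simp)
    | coe x => rw [← EReal.coe_sub] at h ⊢; rw [← EReal.coe_sub]; norm_cast at h ⊢; linarith
    | top => simp
  | top => exact absurd rfl hv

lemma ereal_sub_sub (r : ℝ) (v : EReal) (hv : v ≠ ⊤) : (r:EReal) - ((r:EReal) - v) = v := by
  induction v using EReal.rec with
  | bot => rw [EReal.coe_sub_bot]; simp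
  | coe y => rw [← EReal.coe_sub, ← EReal.coe_sub]; norm_num
  | top => exact absurd rfl hv

/-- KKT sufficiency in the `Φ_lsc` setting: if `(0,−w*) ∈ ∂_lsc f̃(x*)` with
`f̃ = f − a*‖·‖²` and `x* ∈ ∂_X g*_lsc(a*,w*)`, then
`f(x*) + g(x*) = −f̃*(0,−w*) − g*(a*,w*)` and this value is the primal value. -/
theorem kkt_sufficient_lsc {X : Type*} [NormedAddCommGroup X]
    [InnerProductSpace ℝ X] [CompleteSpace X]
    (f g : X → EReal) (hfconv : PhiLscConvex f) (hgconv : PhiLscConvex g)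
    (xstar : X) (astar : ℝ) (hastar : 0 ≤ astar) (wstar : X)
    (hkkt1 : ∀ x : X,
      (f x - ((astar * ‖x‖ ^ 2 : ℝ) : EReal)) -
        (f xstar - ((astar * ‖xstar‖ ^ 2 : ℝ) : EReal)) ≥
      ((⟪-wstar, x - xstar⟫ : ℝ) : EReal))
    (hkkt2 : ∀ a : ℝ, 0 ≤ a → ∀ w : X, ∀ c : ℝ,
      lscConj g a w c - lscConj g astar wstar 0 ≥
        (((-a * ‖xstar‖ ^ 2 + ⟪w, xstar⟫ + c) -
          (-astar * ‖xstar‖ ^ 2 + ⟪wstar, xstar⟫) : ℝ) : EReal)) :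
    f xstar + g xstar =
      -(lscConj (fun x => f x - ((astar * ‖x‖ ^ 2 : ℝ) : EReal)) 0 (-wstar) 0) -
        lscConj g astar wstar 0 ∧
    f xstar + g xstar = ⨅ x : X, f x + g x := by
  set F : X → EReal := fun x => f x - ((astar * ‖x‖ ^ 2 : ℝ) : EReal) with hF
  set A : EReal := lscConj F 0 (-wstar) 0 with hA
  set B : EReal := lscConj g astar wstar 0 with hB
  set r₂ : ℝ := -astar * ‖xstar‖ ^ 2 + ⟪wstar, xstar⟫ with hr₂
  set r₁ : ℝ := ⟪-wstar, xstar⟫ + astar * ‖xstar‖ ^ 2 with hr₁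
  have hkkt1' : ∀ x : X, F x - F xstar ≥ ((⟪-wstar, x - xstar⟫ : ℝ) : EReal) := hkkt1
  -- F xstar ≠ ⊤
  have hFtop : F xstar ≠ ⊤ := by
    intro htop
    have h0 := hkkt1' xstar
    rw [htop, sub_self, inner_zero_right] at h0
    rw [sub_eq_add_neg, EReal.neg_top, EReal.add_bot] at h0
    exact absurd h0 (by simp)
  -- A = ⟪-wstar, xstar⟫ - F xstar
  have hAeq : A = ((⟪-wstar, xstar⟫ : ℝ) : EReal) - F xstar := by
    apply le_antisymm
    · apply iSup_le
      intro x
      have hc : (-(0:ℝ) * ‖x‖ ^ 2 + ⟪-wstar, x⟫ + 0 : ℝ) = ⟪-wstar, x⟫ := by ring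
      rw [hc]
      refine ereal_shift (⟪-wstar, x - xstar⟫) _ _ _ _ ?_ hFtop ?_
      · rw [inner_sub_right]
      · exact hkkt1' x
    · refine le_iSup_of_le xstar (le_of_eq ?_)
      congr 1
      norm_cast
      ring
  -- F xstar = ⟪-wstar, xstar⟫ - A
  have hFeq : F xstar = ((⟪-wstar, xstar⟫ : ℝ) : EReal) - A := by
    rw [hAeq, ereal_sub_sub _ _ hFtop]
  -- f xstar = r₁ - A
  have hfeq : f xstar = ((r₁ : ℝ) : EReal) - A := by
    have h1 : f xstar = F xstar + ((astar * ‖xstar‖ ^ 2 : ℝ) : EReal) := by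
      rw [hF]; exact (EReal.sub_add_cancel).symm
    rw [h1, hFeq, sub_eq_add_neg, sub_eq_add_neg, add_right_comm, ← EReal.coe_add, hr₁]
  -- g xstar = r₂ - B
  have hgeq : g xstar = ((r₂ : ℝ) : EReal) - B := by
    apply le_antisymm
    · rw [hgconv xstar]
      apply iSup₂_le
      rintro φ ⟨⟨a, ha, w, c, hφeq⟩, hmin⟩
      have hconj : lscConj g a w c ≤ 0 := by
        apply iSup_le
        intro x
        apply ereal_sub_nonpos
        rw [← hφeq x]
        exact hmin x
      have h2 := hkkt2 a ha w c
      have h3 : (((-a * ‖xstar‖ ^ 2 + ⟪w, xstar⟫ + c) - r₂ : ℝ) : EReal) ≤ -B :=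
        le_trans h2 (by
          calc lscConj g a w c - B ≤ 0 - B := EReal.sub_le_sub hconj le_rfl
          _ = -B := zero_sub B)
      rw [hφeq xstar]
      calc ((-a * ‖xstar‖ ^ 2 + ⟪w, xstar⟫ + c : ℝ) : EReal)
          = ((r₂ : ℝ) : EReal) + (((-a * ‖xstar‖ ^ 2 + ⟪w, xstar⟫ + c) - r₂ : ℝ) : EReal) := by
            norm_cast; ring
        _ ≤ ((r₂ : ℝ) : EReal) + (-B) := add_le_add le_rfl h3
        _ = ((r₂ : ℝ) : EReal) - B := (sub_eq_add_neg _ _).symm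
    · apply ereal_sub_swap
      refine le_iSup_of_le xstar (le_of_eq ?_)
      congr 1
      norm_cast
      rw [hr₂]; ring
  -- r₁ + r₂ = 0
  have hr0 : r₁ + r₂ = 0 := by
    rw [hr₁, hr₂, inner_neg_left]; ring
  have goal1 : f xstar + g xstar = -A - B := by
    rw [hfeq, hgeq, sub_eq_add_neg ((r₁:ℝ):EReal), sub_eq_add_neg ((r₂:ℝ):EReal),
      sub_eq_add_neg (-A)]
    exact ereal_addadd (-A) (-B) r₁ r₂ hr0
  refine ⟨goal1, le_antisymm ?_ (iInf_le _ xstar)⟩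
  apply le_iInf
  intro x
  rw [goal1]
  have hAx : ((⟪-wstar, x⟫ : ℝ) : EReal) - F x ≤ A := by
    have h' : ((-(0:ℝ) * ‖x‖ ^ 2 + ⟪-wstar, x⟫ + 0 : ℝ) : EReal) - F x ≤ A :=
      le_iSup (fun y => ((-(0:ℝ) * ‖y‖ ^ 2 + ⟪-wstar, y⟫ + 0 : ℝ) : EReal) - F y) x
    refine le_trans (le_of_eq ?_) h'
    congr 1; norm_cast; ring
  have hBx : ((-astar * ‖x‖ ^ 2 + ⟪wstar, x⟫ : ℝ) : EReal) - g x ≤ B := by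
    have h' : ((-astar * ‖x‖ ^ 2 + ⟪wstar, x⟫ + 0 : ℝ) : EReal) - g x ≤ B :=
      le_iSup (fun y => ((-astar * ‖y‖ ^ 2 + ⟪wstar, y⟫ + 0 : ℝ) : EReal) - g y) x
    refine le_trans (le_of_eq ?_) h'
    congr 1; norm_cast; ring
  have h4 : -A - B ≤ (F x - ((⟪-wstar, x⟫ : ℝ) : EReal)) +
      (g x - ((-astar * ‖x‖ ^ 2 + ⟪wstar, x⟫ : ℝ) : EReal)) := by
    rw [sub_eq_add_neg (-A)]
    refine add_le_add ?_ ?_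
    · rw [← ereal_neg_sub]; exact EReal.neg_le_neg_iff.mpr hAx
    · rw [← ereal_neg_sub]; exact EReal.neg_le_neg_iff.mpr hBx
  refine le_trans h4 (le_of_eq ?_)
  have hFx : F x - ((⟪-wstar, x⟫ : ℝ) : EReal)
      = ((-(astar * ‖x‖ ^ 2 + ⟪-wstar, x⟫) : ℝ) : EReal) + f x := by
    show (f x - ((astar * ‖x‖ ^ 2 : ℝ) : EReal)) - ((⟪-wstar, x⟫ : ℝ) : EReal) = _
    rw [sub_eq_add_neg (f x), sub_eq_add_neg, add_assoc, ← EReal.coe_neg, ← EReal.coe_neg,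
      ← EReal.coe_add, add_comm]
    congr 2
    ring
  have hgx : g x - ((-astar * ‖x‖ ^ 2 + ⟪wstar, x⟫ : ℝ) : EReal)
      = ((-(-astar * ‖x‖ ^ 2 + ⟪wstar, x⟫) : ℝ) : EReal) + g x := by
    rw [sub_eq_add_neg, ← EReal.coe_neg, add_comm]
  rw [hFx, hgx]
  exact ereal_addadd (f x) (g x) _ _ (by rw [inner_neg_left]; ring)
end
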